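/- Let μ = (μ₁,…,μ_{r}) be a partition with μ_r ≥ 1 written via the strictly decreasing sequence n_j = μ_j + r − j, and let ν = ∅. Then the evaluation at x = 0 of the Wronskian of the Laguerre seed functions L_{n₁}^α,…,L_{n_r}^α equals, up to sign, [∏_{k=1}^{r}(α+k)^{(r−k)} · ∏_{i=1}^{s−1}(α+r)^{(n_i−r+1)} · Δ(−n_r,…,−n_1)] / [∏_{i=s}^{r}(α+1+n_i)^{(r−1−n_i)} · ∏_{i=1}^{r} n_i!], where s is the smallest index such that n_i < r−1 for all i ≥ s (with s = r+1 if no such index exists) and Δ is the Vandermonde product. -/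

import Mathlib

/-- Generalized binomial coefficient `binom(a, m) = a(a-1)⋯(a-m+1)/m!`. -/
noncomputable def genBinom (a : ℝ) (m : ℕ) : ℝ :=
  (∏ i ∈ Finset.range m, (a - i)) / m.factorial

/-- The generalized Laguerre polynomial
`L_n^α(x) = Σ_{k=0}^n (−1)^k binom(n+α, n−k) x^k / k!`. -/
noncomputable def laguerre (n : ℕ) (α x : ℝ) : ℝ :=
  ∑ k ∈ Finset.range (n + 1),
    (-1 : ℝ) ^ k * genBinom ((n : ℝ) + α) (n - k) * x ^ k / k.factorial

/-- The rising factorial `(a)^{(k)} = a(a+1)⋯(a+k−1)`. -/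
noncomputable def risingFactorial (a : ℝ) (k : ℕ) : ℝ :=
  ∏ i ∈ Finset.range k, (a + i)

/-- The Wronskian of functions `f 0, …, f (r-1)` at `x`. -/
noncomputable def wronskian {r : ℕ} (f : Fin r → ℝ → ℝ) (x : ℝ) : ℝ :=
  Matrix.det (Matrix.of fun i j : Fin r => iteratedDeriv (i : ℕ) (f j) x)

open Finset Polynomial

/-! ### Auxiliary lemmas -/

/-- The Laguerre function as evaluation of a polynomial. -/
noncomputable def lagPoly (m : ℕ) (α : ℝ) : ℝ[X] :=
  ∑ k ∈ range (m + 1), C ((-1 : ℝ) ^ k * genBinom ((m : ℝ) + α) (m - k) / k.factorial) * X ^ k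

lemma laguerre_eq_eval (m : ℕ) (α x : ℝ) : laguerre m α x = (lagPoly m α).eval x := by
  unfold laguerre lagPoly
  rw [eval_finset_sum]
  refine Finset.sum_congr rfl fun k _ => ?_
  rw [eval_mul, eval_C, eval_pow, eval_X]
  ring

lemma iteratedDeriv_eval (p : ℝ[X]) (k : ℕ) :
    iteratedDeriv k (fun x => p.eval x) = fun x => ((⇑Polynomial.derivative)^[k] p).eval x := by
  induction k with
  | zero => simp
  | succ k ih =>
    rw [iteratedDeriv_succ, ih]
    funext x
    rw [Function.iterate_succ_apply']
    exact Polynomial.deriv _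

lemma lagPoly_coeff (m : ℕ) (α : ℝ) (i : ℕ) :
    (lagPoly m α).coeff i =
      if i ≤ m then (-1 : ℝ) ^ i * genBinom ((m : ℝ) + α) (m - i) / i.factorial else 0 := by
  unfold lagPoly
  rw [finset_sum_coeff]
  simp only [coeff_C_mul, coeff_X_pow]
  by_cases h : i ≤ m
  · rw [Finset.sum_eq_single i]
    · simp [h]
    · intro b _ hb
      simp [Ne.symm hb]
    · intro hcon
      exact absurd (Finset.mem_range.mpr (by omega)) hcon
  · rw [if_neg h]
    apply Finset.sum_eq_zero
    intro b hb
    have : b ≠ i := by have := Finset.mem_range.mp hb; omega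
    simp [this, Ne.symm this]

lemma iteratedDeriv_laguerre (m : ℕ) (α : ℝ) (i : ℕ) :
    iteratedDeriv i (fun x => laguerre m α x) 0 =
      if i ≤ m then (-1 : ℝ) ^ i * genBinom ((m : ℝ) + α) (m - i) else 0 := by
  have h1 : (fun x => laguerre m α x) = fun x => (lagPoly m α).eval x := by
    funext x; exact laguerre_eq_eval m α x
  rw [h1, iteratedDeriv_eval]
  show Polynomial.eval 0 ((⇑Polynomial.derivative)^[i] (lagPoly m α)) = _
  rw [← Polynomial.coeff_zero_eq_eval_zero, Polynomial.coeff_iterate_derivative]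
  rw [lagPoly_coeff]
  have : (0 + i).descFactorial i = i.factorial := by
    simp [Nat.descFactorial_self]
  rw [this]
  by_cases h : i ≤ m
  · simp only [h, if_true, nsmul_eq_mul]
    have h2 : (i.factorial : ℝ) ≠ 0 := Nat.cast_ne_zero.mpr (Nat.factorial_ne_zero i)
    simp only [Nat.zero_add, h, if_true]
    rw [mul_comm]
    exact div_mul_cancel₀ _ h2
  · simp [h]

lemma descPoch_eval (x : ℝ) (k : ℕ) :
    (descPochhammer ℝ k).eval x = ∏ t ∈ range k, (x - t) := by
  induction k with
  | zero => simp [descPochhammer_zero]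
  | succ k ih => rw [descPochhammer_succ_eval, ih, Finset.prod_range_succ]

lemma det_ff {r : ℕ} (v : Fin r → ℝ) :
    Matrix.det (Matrix.of fun i j : Fin r => ∏ t ∈ range (i : ℕ), (v j - t)) =
      ∏ i : Fin r, ∏ j ∈ Finset.Ioi i, (v j - v i) := by
  have h1 : Matrix.det (Matrix.of fun i j : Fin r => ∏ t ∈ range (i : ℕ), (v j - t)) =
      Matrix.det (Matrix.of fun i j : Fin r => Polynomial.eval (v i) (descPochhammer ℝ (j : ℕ))) := by
    rw [← Matrix.det_transpose]
    congr 1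
    ext i j
    simp [Matrix.transpose_apply, descPoch_eval]
  rw [h1, ← Matrix.det_eval_matrixOfPolynomials_eq_det_vandermonde v
    (fun i => descPochhammer ℝ (i : ℕ))
    (fun i => descPochhammer_natDegree (R := ℝ) (i : ℕ))
    (fun i => monic_descPochhammer ℝ (i : ℕ)), Matrix.det_vandermonde]

/-- Generic-α determinant evaluation. -/
lemma gen_det {r : ℕ} (c : Fin r → ℕ) (hc : ∀ j : Fin r, r - 1 - (j : ℕ) ≤ c j) (a : ℝ)
    (ha : ∀ k : ℕ, 1 ≤ k → k ≤ r - 1 → a + k ≠ 0) :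
    Matrix.det (Matrix.of fun i j : Fin r =>
      (∏ t ∈ range (i : ℕ), ((c j : ℝ) - t)) * ∏ u ∈ Finset.Ico (i : ℕ) (c j), (a + 1 + u)) =
    (∏ i : Fin r, ∏ j ∈ Finset.Ioi i, ((c j : ℝ) - (c i : ℝ))) *
      ∏ j : Fin r, ∏ u ∈ Finset.Ico (r - 1 - (j : ℕ)) (c j), (a + 1 + u) := by
  set Q : ℕ → ℝ := fun m => ∏ u ∈ range m, (a + 1 + u) with hQdef
  have hQ : ∀ m : ℕ, m ≤ r - 1 → Q m ≠ 0 := by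
    intro m hm
    apply Finset.prod_ne_zero_iff.mpr
    intro u hu
    have hu' := Finset.mem_range.mp hu
    have : a + 1 + (u : ℝ) = a + ((u + 1 : ℕ) : ℝ) := by push_cast; ring
    rw [this]
    exact ha (u + 1) (by omega) (by omega)
  have hsplit : ∀ (i m : ℕ), i ≤ m → Q i * ∏ u ∈ Finset.Ico i m, (a + 1 + u) = Q m := by
    intro i m him
    rw [hQdef]
    simp only
    rw [Finset.range_eq_Ico, Finset.prod_Ico_consecutive _ (Nat.zero_le i) him,
      ← Finset.range_eq_Ico]
  -- rewrite the matrix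
  have hmat : (Matrix.of fun i j : Fin r =>
      (∏ t ∈ range (i : ℕ), ((c j : ℝ) - t)) * ∏ u ∈ Finset.Ico (i : ℕ) (c j), (a + 1 + u)) =
      Matrix.of fun i j : Fin r =>
        (Q (i : ℕ))⁻¹ * (Q (c j) * (∏ t ∈ range (i : ℕ), ((c j : ℝ) - t))) := by
    ext i j
    simp only [Matrix.of_apply]
    by_cases h : (i : ℕ) ≤ c j
    · have hQi : Q (i : ℕ) ≠ 0 := hQ _ (by omega)
      rw [← hsplit (i : ℕ) (c j) h]
      field_simp
    · have hzero : (∏ t ∈ range (i : ℕ), ((c j : ℝ) - t)) = 0 := by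
        apply Finset.prod_eq_zero (Finset.mem_range.mpr (by omega : c j < (i : ℕ)))
        simp
      rw [hzero]; ring
  rw [hmat]
  rw [Matrix.det_mul_column (fun i : Fin r => (Q (i : ℕ))⁻¹)
    (fun i j : Fin r => Q (c j) * ∏ t ∈ range (i : ℕ), ((c j : ℝ) - t))]
  rw [show (Matrix.det fun i j : Fin r => Q (c j) * ∏ t ∈ range (i : ℕ), ((c j : ℝ) - ↑t)) =
    Matrix.det (Matrix.of fun i j : Fin r => Q (c j) * ∏ t ∈ range (i : ℕ), ((c j : ℝ) - ↑t))
    from rfl]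
  rw [Matrix.det_mul_row (fun j : Fin r => Q (c j))
    (fun i j : Fin r => ∏ t ∈ range (i : ℕ), ((c j : ℝ) - t))]
  rw [show (Matrix.det fun i j : Fin r => ∏ t ∈ range (i : ℕ), ((c j : ℝ) - ↑t)) =
    Matrix.det (Matrix.of fun i j : Fin r => ∏ t ∈ range (i : ℕ), ((c j : ℝ) - ↑t)) from rfl]
  rw [det_ff (fun j => (c j : ℝ))]
  have hrev : (∏ i : Fin r, (Q (i : ℕ))⁻¹) = ∏ j : Fin r, (Q (r - 1 - (j : ℕ)))⁻¹ := by
    rw [← Equiv.prod_comp Fin.revPerm (fun i : Fin r => (Q (i : ℕ))⁻¹)]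
    refine Finset.prod_congr rfl fun j _ => ?_
    congr 2
    simp [Fin.revPerm, Fin.val_rev]
    omega
  rw [hrev]
  have this1 : ∀ j : Fin r, (Q (r - 1 - (j : ℕ)))⁻¹ * Q (c j) =
      ∏ u ∈ Finset.Ico (r - 1 - (j : ℕ)) (c j), (a + 1 + u) := by
    intro j
    have h1 : Q (r - 1 - (j : ℕ)) ≠ 0 := hQ _ (by omega)
    rw [← hsplit (r - 1 - (j : ℕ)) (c j) (hc j)]
    field_simp
  have key : (∏ j : Fin r, (Q (r - 1 - (j : ℕ)))⁻¹) * (∏ x : Fin r, Q (c x)) =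
      ∏ j : Fin r, ∏ u ∈ Finset.Ico (r - 1 - (j : ℕ)) (c j), (a + 1 + u) := by
    rw [← Finset.prod_mul_distrib]
    exact Finset.prod_congr rfl fun j _ => this1 j
  rw [← mul_assoc, key]
  ring

/-- The determinant evaluation for arbitrary `a`, via polynomial identity. -/
lemma all_det {r : ℕ} (c : Fin r → ℕ) (hc : ∀ j : Fin r, r - 1 - (j : ℕ) ≤ c j) (a : ℝ) :
    Matrix.det (Matrix.of fun i j : Fin r =>
      (∏ t ∈ range (i : ℕ), ((c j : ℝ) - t)) * ∏ u ∈ Finset.Ico (i : ℕ) (c j), (a + 1 + u)) =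
    (∏ i : Fin r, ∏ j ∈ Finset.Ioi i, ((c j : ℝ) - (c i : ℝ))) *
      ∏ j : Fin r, ∏ u ∈ Finset.Ico (r - 1 - (j : ℕ)) (c j), (a + 1 + u) := by
  set PL : ℝ[X] := Matrix.det (Matrix.of fun i j : Fin r =>
    C (∏ t ∈ range (i : ℕ), ((c j : ℝ) - t)) *
      ∏ u ∈ Finset.Ico (i : ℕ) (c j), (X + C ((u : ℝ) + 1))) with hPL
  set PR : ℝ[X] := C (∏ i : Fin r, ∏ j ∈ Finset.Ioi i, ((c j : ℝ) - (c i : ℝ))) *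
      ∏ j : Fin r, ∏ u ∈ Finset.Ico (r - 1 - (j : ℕ)) (c j), (X + C ((u : ℝ) + 1)) with hPR
  have evPL : ∀ x : ℝ, PL.eval x = Matrix.det (Matrix.of fun i j : Fin r =>
      (∏ t ∈ range (i : ℕ), ((c j : ℝ) - t)) * ∏ u ∈ Finset.Ico (i : ℕ) (c j), (x + 1 + u)) := by
    intro x
    rw [hPL]
    calc Polynomial.eval x (Matrix.det (Matrix.of fun i j : Fin r =>
          C (∏ t ∈ range (i : ℕ), ((c j : ℝ) - t)) *
            ∏ u ∈ Finset.Ico (i : ℕ) (c j), (X + C ((u : ℝ) + 1))))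
        = (Polynomial.evalRingHom x) (Matrix.det (Matrix.of fun i j : Fin r =>
          C (∏ t ∈ range (i : ℕ), ((c j : ℝ) - t)) *
            ∏ u ∈ Finset.Ico (i : ℕ) (c j), (X + C ((u : ℝ) + 1)))) := rfl
      _ = _ := by
          rw [RingHom.map_det]
          congr 1
          ext i j
          simp only [RingHom.mapMatrix_apply, Matrix.map_apply, Matrix.of_apply,
            coe_evalRingHom, eval_mul, eval_C, eval_prod, eval_add, eval_X]
          exact congrArg _ (Finset.prod_congr rfl fun u _ => by ring)
  have evPR : ∀ x : ℝ, PR.eval x =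
      (∏ i : Fin r, ∏ j ∈ Finset.Ioi i, ((c j : ℝ) - (c i : ℝ))) *
        ∏ j : Fin r, ∏ u ∈ Finset.Ico (r - 1 - (j : ℕ)) (c j), (x + 1 + u) := by
    intro x
    rw [hPR]
    simp only [eval_mul, eval_C, eval_prod, eval_add, eval_X]
    exact congrArg _ (Finset.prod_congr rfl fun j _ =>
      Finset.prod_congr rfl fun u _ => by ring)
  have hPLPR : PL = PR := by
    apply Polynomial.eq_of_infinite_eval_eq
    have hsub : ((((Finset.Icc 1 (r - 1)).image fun k : ℕ => -(k : ℝ)) : Finset ℝ) : Set ℝ)ᶜ ⊆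
        {x | PL.eval x = PR.eval x} := by
      intro x hx
      simp only [Set.mem_setOf_eq]
      rw [evPL x, evPR x]
      apply gen_det c hc x
      intro k hk1 hk2 hcon
      apply hx
      refine Finset.mem_coe.mpr (Finset.mem_image.mpr ⟨k, Finset.mem_Icc.mpr ⟨hk1, hk2⟩, ?_⟩)
      linarith
    exact Set.Infinite.mono hsub (Set.Finite.infinite_compl (Finset.finite_toSet _))
  rw [← evPL a, hPLPR, evPR a]

lemma strictAnti_add_le {r : ℕ} (n : Fin r → ℕ) (hn : StrictAnti n) :
    ∀ (d : ℕ) (a b : Fin r), (b : ℕ) = (a : ℕ) + d → n b + d ≤ n a := by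
  intro d
  induction d with
  | zero => intro a b h; have hab : a = b := Fin.ext (by omega); rw [hab]; omega
  | succ d ih =>
    intro a b h
    have hb' : (a : ℕ) + d < r := by have := b.isLt; omega
    set b' : Fin r := ⟨(a : ℕ) + d, hb'⟩ with hb'def
    have h1 : n b < n b' := hn (by simp only [Fin.lt_def, hb'def]; omega)
    have h2 := ih a b' rfl
    omega

lemma rf_eq_Ico (x : ℝ) (b e : ℕ) :
    (∏ u ∈ Finset.Ico b e, (x + 1 + (u : ℝ))) = risingFactorial (x + b + 1) (e - b) := by
  rw [Finset.prod_Ico_eq_prod_range]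
  unfold risingFactorial
  exact Finset.prod_congr rfl fun i _ => by push_cast; ring

lemma prod_Ioi_rev {r : ℕ} (f : Fin r → Fin r → ℝ) :
    (∏ i : Fin r, ∏ j ∈ Finset.Ioi i, f i j) =
      ∏ i : Fin r, ∏ j ∈ Finset.Ioi i, f j.rev i.rev := by
  rw [Finset.prod_sigma', Finset.prod_sigma']
  refine Finset.prod_nbij' (fun p => ⟨p.2.rev, p.1.rev⟩) (fun p => ⟨p.2.rev, p.1.rev⟩)
    ?_ ?_ ?_ ?_ ?_
  · intro p hp
    simp only [Finset.mem_sigma, Finset.mem_univ, Finset.mem_Ioi, true_and] at hp ⊢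
    exact Fin.rev_lt_rev.mpr hp
  · intro p hp
    simp only [Finset.mem_sigma, Finset.mem_univ, Finset.mem_Ioi, true_and] at hp ⊢
    exact Fin.rev_lt_rev.mpr hp
  · intro p _; simp [Fin.rev_rev]
  · intro p _; simp [Fin.rev_rev]
  · intro p _; simp [Fin.rev_rev]

lemma cast_descF (m i : ℕ) (h : i ≤ m) :
    ((m.descFactorial i : ℕ) : ℝ) = ∏ t ∈ range i, ((m : ℝ) - t) := by
  induction i with
  | zero => simp
  | succ i ih =>
    rw [Nat.descFactorial_succ, Finset.prod_range_succ, ← ih (by omega)]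
    push_cast [Nat.cast_sub (by omega : i ≤ m)]
    ring

lemma prod_shift (m i : ℕ) (α : ℝ) (h : i ≤ m) :
    (∏ t ∈ range (m - i), ((m : ℝ) + α - t)) = ∏ u ∈ Finset.Ico i m, (α + 1 + u) := by
  rw [Finset.prod_Ico_eq_prod_range, ← Finset.prod_range_reflect]
  refine Finset.prod_congr rfl fun t ht => ?_
  have ht' := Finset.mem_range.mp ht
  have he : m - i - 1 - t + (i + 1 + t) = m := by omega
  have : ((m - i - 1 - t : ℕ) : ℝ) = (m : ℝ) - ((i : ℝ) + 1 + t) := by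
    have := congrArg (fun z : ℕ => (z : ℝ)) he
    push_cast at this
    linarith
  rw [this]
  push_cast
  ring

lemma genBinom_prod (m i : ℕ) (α : ℝ) (h : i ≤ m) :
    ((m.factorial : ℕ) : ℝ) * genBinom ((m : ℝ) + α) (m - i) =
      (∏ t ∈ range i, ((m : ℝ) - t)) * ∏ u ∈ Finset.Ico i m, (α + 1 + u) := by
  unfold genBinom
  rw [prod_shift m i α h, ← cast_descF m i h]
  have hfac : (m - i).factorial * m.descFactorial i = m.factorial :=
    Nat.factorial_mul_descFactorial h
  have h1 : (((m - i).factorial : ℕ) : ℝ) ≠ 0 := Nat.cast_ne_zero.mpr (Nat.factorial_ne_zero _)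
  field_simp
  rw [← hfac]
  push_cast
  ring

/-- Evaluation at `x = 0` of the Wronskian of Laguerre seed functions
`L_{n₁}^α, …, L_{n_r}^α` (with `n` strictly decreasing, `n_r ≥ 1`, i.e. coming
from a partition `μ` with `μ_r ≥ 1` and `ν = ∅`): up to sign it equals
`[∏_{k=1}^{r}(α+k)^{(r−k)} ∏_{i<s}(α+r)^{(n_i−r+1)} Δ(−n_r,…,−n_1)] /
 [∏_{i≥s}(α+1+n_i)^{(r−1−n_i)} ∏_i n_i!]`,
where `s` is the smallest (1-based) index with `n_i < r−1` for all `i ≥ s`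
(`s = r+1` if none exists). -/
theorem wronskian_laguerre_at_zero (r : ℕ) (hr : 1 ≤ r) (α : ℝ)
    (n : Fin r → ℕ) (hn : StrictAnti n) (hlast : 1 ≤ n ⟨r - 1, by omega⟩)
    (s : ℕ) (hs₁ : 1 ≤ s) (hs₂ : s ≤ r + 1)
    (hsmall : ∀ i : Fin r, s ≤ (i : ℕ) + 1 → n i < r - 1)
    (hbig : ∀ i : Fin r, (i : ℕ) + 1 < s → r - 1 ≤ n i) :
    ∃ ε : ℝ, (ε = 1 ∨ ε = -1) ∧
      wronskian (fun j => fun x => laguerre (n j) α x) 0 =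
        ε * ((∏ k ∈ Finset.range r, risingFactorial (α + ((k : ℝ) + 1)) (r - (k + 1))) *
            (∏ i ∈ Finset.univ.filter (fun i : Fin r => (i : ℕ) + 1 < s),
              risingFactorial (α + r) (n i + 1 - r)) *
            (∏ i : Fin r, ∏ j ∈ Finset.Ioi i, ((n i.rev : ℝ) - (n j.rev : ℝ)))) /
          ((∏ i ∈ Finset.univ.filter (fun i : Fin r => s ≤ (i : ℕ) + 1),
              risingFactorial (α + 1 + (n i : ℝ)) (r - 1 - n i)) *
            ∏ i : Fin r, ((n i).factorial : ℝ)) := by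
  -- basic inequality: `n j ≥ r - j`
  have hc : ∀ j : Fin r, r - (j : ℕ) ≤ n j := by
    intro j
    have hj : (j : ℕ) ≤ r - 1 := by have := j.isLt; omega
    have hlt : r - 1 < r := by omega
    have := strictAnti_add_le n hn (r - 1 - (j : ℕ)) j ⟨r - 1, hlt⟩ (by simp; omega)
    omega
  -- notation
  set Rico : ℕ → ℕ → ℝ := fun b e => ∏ u ∈ Finset.Ico b e, (α + 1 + (u : ℝ)) with hRico
  set Vdm : ℝ := ∏ i : Fin r, ∏ j ∈ Finset.Ioi i, ((n j : ℝ) - (n i : ℝ)) with hVdm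
  set P : ℝ := ∏ j : Fin r, Rico (r - 1 - (j : ℕ)) (n j) with hP
  set F : ℝ := ∏ i : Fin r, ((n i).factorial : ℝ) with hF
  set N1 : ℝ := ∏ k ∈ Finset.range r, risingFactorial (α + ((k : ℝ) + 1)) (r - (k + 1)) with hN1
  set N2 : ℝ := ∏ i ∈ Finset.univ.filter (fun i : Fin r => (i : ℕ) + 1 < s),
      risingFactorial (α + r) (n i + 1 - r) with hN2
  set D : ℝ := ∏ i ∈ Finset.univ.filter (fun i : Fin r => s ≤ (i : ℕ) + 1),
      risingFactorial (α + 1 + (n i : ℝ)) (r - 1 - n i) with hD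
  set T : ℝ := ∏ i : Fin r, ∏ j ∈ Finset.Ioi i, ((n i.rev : ℝ) - (n j.rev : ℝ)) with hT
  have hFne : F ≠ 0 := by
    rw [hF]
    exact Finset.prod_ne_zero_iff.mpr fun i _ =>
      Nat.cast_ne_zero.mpr (Nat.factorial_ne_zero _)
  -- the Vandermonde products agree
  have hTV : T = Vdm := by
    rw [hT, prod_Ioi_rev (fun i j => (n i.rev : ℝ) - (n j.rev : ℝ))]
    simp [Fin.rev_rev]
    rw [hVdm]
  -- the Wronskian
  set A : Matrix (Fin r) (Fin r) ℝ := Matrix.of fun i j : Fin r =>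
    if (i : ℕ) ≤ n j then genBinom ((n j : ℝ) + α) (n j - (i : ℕ)) else 0 with hA
  have hW : wronskian (fun j => fun x => laguerre (n j) α x) 0 =
      (∏ i : Fin r, (-1 : ℝ) ^ (i : ℕ)) * A.det := by
    show Matrix.det (Matrix.of fun i j : Fin r =>
      iteratedDeriv (i : ℕ) ((fun j => fun x => laguerre (n j) α x) j) 0) = _
    have : (Matrix.of fun i j : Fin r =>
        iteratedDeriv (i : ℕ) ((fun j => fun x => laguerre (n j) α x) j) 0) =
        Matrix.of fun i j : Fin r => (-1 : ℝ) ^ (i : ℕ) * A i j := by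
      ext i j
      rw [Matrix.of_apply, Matrix.of_apply, iteratedDeriv_laguerre, hA]
      by_cases h : (i : ℕ) ≤ n j <;> simp [h]
    rw [this, Matrix.det_mul_column]
  -- relate `A.det` to the `B` determinant
  have hdetB : F * A.det = Vdm * P := by
    have hB : (Matrix.of fun i j : Fin r =>
        (∏ t ∈ range (i : ℕ), ((n j : ℝ) - t)) *
          ∏ u ∈ Finset.Ico (i : ℕ) (n j), (α + 1 + u)) =
        Matrix.of fun i j : Fin r => ((n j).factorial : ℝ) * A i j := by
      ext i j
      rw [Matrix.of_apply, Matrix.of_apply, hA]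
      simp only [hA, Matrix.of_apply]
      by_cases h : (i : ℕ) ≤ n j
      · rw [if_pos h]
        exact (genBinom_prod (n j) (i : ℕ) α h).symm
      · rw [if_neg h, mul_zero]
        have : ((n j : ℝ) - (n j : ℕ)) = 0 := by simp
        rw [Finset.prod_eq_zero (Finset.mem_range.mpr (by omega : n j < (i : ℕ))) this,
          zero_mul]
    have h2 : Matrix.det (Matrix.of fun i j : Fin r => ((n j).factorial : ℝ) * A i j) =
        F * A.det := by
      rw [Matrix.det_mul_row, hF]
    have h1 := all_det n (fun j => by have := hc j; omega) α
    rw [← h2, ← hB, h1, hVdm, hP, hRico]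
  -- the numerator/denominator identity
  have hN1' : N1 = ∏ j : Fin r, Rico (r - 1 - (j : ℕ)) (r - 1) := by
    rw [hN1]
    rw [← Fin.prod_univ_eq_prod_range
      (fun k => risingFactorial (α + ((k : ℝ) + 1)) (r - (k + 1))) r]
    rw [← Equiv.prod_comp Fin.revPerm
      (fun j : Fin r => risingFactorial (α + (((j : ℕ) : ℝ) + 1)) (r - ((j : ℕ) + 1)))]
    refine Finset.prod_congr rfl fun j _ => ?_
    simp only [hRico, Fin.revPerm_apply, Fin.val_rev]
    rw [rf_eq_Ico]
    have hjlt := j.isLt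
    have h1 : r - ((j : ℕ) + 1) = r - 1 - (j : ℕ) := by omega
    rw [h1]
    congr 1
    · ring
    · omega
  have hN2' : N2 = ∏ j : Fin r, (if (j : ℕ) + 1 < s then Rico (r - 1) (n j) else 1) := by
    rw [hN2, Finset.prod_filter]
    refine Finset.prod_congr rfl fun j _ => ?_
    by_cases hj : (j : ℕ) + 1 < s
    · rw [if_pos hj, if_pos hj]
      simp only [hRico]
      rw [rf_eq_Ico]
      congr 1
      · have he : r - 1 + 1 = r := by omega
        have hcast := congrArg (fun z : ℕ => (z : ℝ)) he
        push_cast at hcast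
        linarith
      · omega
    · rw [if_neg hj, if_neg hj]
  have hD' : D = ∏ j : Fin r, (if s ≤ (j : ℕ) + 1 then Rico (n j) (r - 1) else 1) := by
    rw [hD, Finset.prod_filter]
    refine Finset.prod_congr rfl fun j _ => ?_
    by_cases hj : s ≤ (j : ℕ) + 1
    · rw [if_pos hj, if_pos hj]
      simp only [hRico]
      rw [rf_eq_Ico]
      congr 1
      ring
    · rw [if_neg hj, if_neg hj]
  have hNum : N1 * N2 = D * P := by
    rw [hN1', hN2', hD', hP, ← Finset.prod_mul_distrib, ← Finset.prod_mul_distrib]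
    refine Finset.prod_congr rfl fun j _ => ?_
    simp only [hRico]
    by_cases hj : (j : ℕ) + 1 < s
    · have hns : ¬ s ≤ (j : ℕ) + 1 := by omega
      rw [if_pos hj, if_neg hns, one_mul]
      exact Finset.prod_Ico_consecutive _ (by omega) (hbig j hj)
    · have hsj : s ≤ (j : ℕ) + 1 := by omega
      have hub : n j ≤ r - 1 := by have := hsmall j hsj; omega
      have hlb : r - 1 - (j : ℕ) ≤ n j := by have := hc j; omega
      have hnj : ¬ (j : ℕ) + 1 < s := by omega
      rw [if_neg hnj, if_pos hsj, mul_one, mul_comm]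
      exact (Finset.prod_Ico_consecutive _ hlb hub).symm
  -- case split on the denominator
  by_cases hD0 : D = 0
  · -- denominator vanishes: both sides are zero
    refine ⟨1, Or.inl rfl, ?_⟩
    have hP0 : P = 0 := by
      rw [hD] at hD0
      obtain ⟨j0, hj0mem, hj0⟩ := Finset.prod_eq_zero_iff.mp hD0
      unfold risingFactorial at hj0
      obtain ⟨t, htmem, htz⟩ := Finset.prod_eq_zero_iff.mp hj0
      have ht : t < r - 1 - n j0 := Finset.mem_range.mp htmem
      have hα : α = -((n j0 + 1 + t : ℕ) : ℝ) := by push_cast; push_cast at htz; linarith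
      set u : ℕ := n j0 + 1 + t with hu
      have hu1 : 1 ≤ u := by omega
      have hu2 : u ≤ r - 1 := by omega
      have hj'lt : r - u < r := by omega
      have hj0c := hc j0
      have hj0lt := j0.isLt
      have hj'j0 : r - u < (j0 : ℕ) := by omega
      have hanti := strictAnti_add_le n hn ((j0 : ℕ) - (r - u)) ⟨r - u, hj'lt⟩ j0 (by simp; omega)
      have hnj' : u ≤ n ⟨r - u, hj'lt⟩ := by
        have : (((⟨r - u, hj'lt⟩ : Fin r) : ℕ)) = r - u := rfl
        omega
      rw [hP]
      apply Finset.prod_eq_zero (Finset.mem_univ (⟨r - u, hj'lt⟩ : Fin r))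
      simp only [hRico]
      have hmem : u - 1 ∈ Finset.Ico (r - 1 - ((⟨r - u, hj'lt⟩ : Fin r) : ℕ))
          (n ⟨r - u, hj'lt⟩) := by
        refine Finset.mem_Ico.mpr ⟨?_, ?_⟩
        · show r - 1 - (r - u) ≤ u - 1
          omega
        · omega
      apply Finset.prod_eq_zero hmem
      have hcast : ((u - 1 : ℕ) : ℝ) = (u : ℝ) - 1 := by
        have he : u - 1 + 1 = u := by omega
        have := congrArg (fun z : ℕ => (z : ℝ)) he
        push_cast at this
        linarith
      rw [hα, hcast]
      push_cast
      ring
    have hA0 : A.det = 0 := by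
      have h0 : F * A.det = 0 := by rw [hdetB, hP0, mul_zero]
      rcases mul_eq_zero.mp h0 with h | h
      · exact absurd h hFne
      · exact h
    rw [hW, hA0, mul_zero, hD0, zero_mul, div_zero]
  · -- denominator does not vanish
    refine ⟨∏ i : Fin r, (-1 : ℝ) ^ (i : ℕ), ?_, ?_⟩
    · rw [Finset.prod_pow_eq_pow_sum]
      exact neg_one_pow_eq_or ℝ _
    · have hgoal : (N1 * N2 * T) / (D * F) = A.det := by
        rw [hTV, hNum]
        rw [div_eq_iff (mul_ne_zero hD0 hFne)]
        linear_combination (-D) * hdetB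
      rw [hW, ← hgoal]
      ring
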